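/- For all integers m, q with 1 ≤ q ≤ m and all real t, (sin t)^{2m} = (1/2^{2m−1}) Σ_{k=1}^m C(2m, m−k) (−1)^{k+q} f_{2q}(2kt). -/

import Mathlib

open Real MeasureTheory Filter Finset

noncomputable def f (n : ℕ) (t : ℝ) : ℝ :=
  if n % 2 = 1 then
    (-1 : ℝ) ^ (n / 2) *
      (Real.sin t - ∑ k ∈ Finset.range (n / 2), (-1 : ℝ) ^ k * t ^ (2 * k + 1) / (Nat.factorial (2 * k + 1)))
  else
    (-1 : ℝ) ^ (n / 2) *
      (Real.cos t - ∑ k ∈ Finset.range (n / 2), (-1 : ℝ) ^ k * t ^ (2 * k) / (Nat.factorial (2 * k)))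

lemma aux_fwdDiff_pow_eq_zero (r : ℕ) :
    ∀ n, r < n → (fwdDiff (1:ℝ))^[n] (fun x : ℝ ↦ x ^ r) = 0 := by
  induction r using Nat.strong_induction_on with
  | _ r IH =>
    intro n hn
    obtain ⟨n, rfl⟩ : ∃ k, n = k + 1 := ⟨n - 1, by omega⟩
    rw [Function.iterate_succ_apply]
    have hΔ : fwdDiff (1:ℝ) (fun x : ℝ ↦ x ^ r)
        = ∑ j ∈ Finset.range r, (r.choose j : ℝ) • (fun x : ℝ ↦ x ^ j) := by
      funext x
      simp only [fwdDiff, Finset.sum_apply, Pi.smul_apply, smul_eq_mul]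
      rw [add_pow, Finset.sum_range_succ]
      simp [mul_comm]
    rw [hΔ, fwdDiff_iter_finset_sum]
    refine Finset.sum_eq_zero fun j hj => ?_
    have hjr := Finset.mem_range.mp hj
    rw [fwdDiff_iter_const_smul, IH j hjr n (by omega), smul_zero]

lemma aux_neg_one_pow_sub {k n : ℕ} (h : k ≤ n) : (-1:ℝ)^(n-k) = (-1)^n * (-1)^k := by
  have h2 : ((-1:ℝ))^(n-k) * (-1)^k = (-1)^n := by rw [← pow_add, Nat.sub_add_cancel h]
  have h3 : ((-1:ℝ)^k) * ((-1)^k) = 1 := by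
    rw [← pow_add]; exact Even.neg_one_pow ⟨k, rfl⟩
  calc (-1:ℝ)^(n-k) = (-1:ℝ)^(n-k) * ((-1)^k * (-1)^k) := by rw [h3, mul_one]
    _ = (-1)^n * (-1)^k := by rw [← mul_assoc, h2]

lemma aux_moment (m r : ℕ) (hr : r < 2*m) :
    ∑ i ∈ Finset.range (2*m+1), (-1:ℝ)^i * ((2*m).choose i) * ((i:ℝ) - m)^r = 0 := by
  have h0 := congrFun (aux_fwdDiff_pow_eq_zero r (2*m) hr) (-(m:ℝ))
  rw [fwdDiff_iter_eq_sum_shift] at h0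
  simp only [Pi.zero_apply, nsmul_eq_mul, mul_one, zsmul_eq_mul] at h0
  rw [← h0]
  refine Finset.sum_congr rfl fun i hi => ?_
  have hile : i ≤ 2*m := by
    have := Finset.mem_range.mp hi; omega
  push_cast
  rw [aux_neg_one_pow_sub hile]
  have h1 : ((-1:ℝ))^(2*m) = 1 := Even.neg_one_pow ⟨m, by ring⟩
  rw [h1]
  ring_nf

lemma aux_sum_split {M : Type*} [AddCommMonoid M] (m : ℕ) (h : ℕ → M) :
    ∑ i ∈ Finset.range (2*m+1), h i = h m + ∑ k ∈ Finset.Icc 1 m, (h (m+k) + h (m-k)) := by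
  have e1 : (2*m+1) = (m+1) + m := by omega
  rw [e1, Finset.sum_range_add, Finset.sum_range_succ]
  have eIcc : Finset.Icc 1 m = Finset.Ico 1 (m+1) := by
    rw [Finset.Ico_add_one_right_eq_Icc]
  have e2 : ∑ i ∈ Finset.range m, h i = ∑ k ∈ Finset.Icc 1 m, h (m-k) := by
    rw [eIcc, Finset.sum_Ico_eq_sum_range]
    simp only [Nat.add_sub_cancel]
    rw [← Finset.sum_range_reflect]
    refine Finset.sum_congr rfl fun i hi => ?_
    have := Finset.mem_range.mp hi
    congr 1
    omega
  have e3 : ∑ i ∈ Finset.range m, h (m + 1 + i) = ∑ k ∈ Finset.Icc 1 m, h (m+k) := by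
    rw [eIcc, Finset.sum_Ico_eq_sum_range]
    simp only [Nat.add_sub_cancel]
    refine Finset.sum_congr rfl fun i hi => ?_
    congr 1
    omega
  rw [e2, e3, Finset.sum_add_distrib]
  abel

lemma aux_halved_moment (m j : ℕ) (hj : j < m) :
    ∑ k ∈ Finset.Icc 1 m, (-1:ℝ)^k * ((2*m).choose (m-k)) * (k:ℝ)^(2*j)
      = if j = 0 then -(((2*m).choose m : ℝ))/2 else 0 := by
  have hm := aux_moment m (2*j) (by omega)
  rw [aux_sum_split m (fun i => (-1:ℝ)^i * ((2*m).choose i) * ((i:ℝ) - m)^(2*j))] at hm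
  have hmid : (-1:ℝ)^m * (((2*m).choose m : ℕ) : ℝ) * (((m:ℕ):ℝ) - (m:ℝ))^(2*j)
      = if j = 0 then (-1:ℝ)^m * ((2*m).choose m) else 0 := by
    rcases Nat.eq_zero_or_pos j with rfl | hj0
    · simp
    · rw [if_neg (by omega), sub_self, zero_pow (by omega), mul_zero]
  have hterm : ∀ k ∈ Finset.Icc 1 m,
      ((-1:ℝ)^(m+k) * ((2*m).choose (m+k)) * (((m+k:ℕ):ℝ) - m)^(2*j)
        + (-1:ℝ)^(m-k) * ((2*m).choose (m-k)) * (((m-k:ℕ):ℝ) - m)^(2*j))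
      = (-1:ℝ)^m * (2 * ((-1:ℝ)^k * ((2*m).choose (m-k)) * (k:ℝ)^(2*j))) := by
    intro k hk
    obtain ⟨hk1, hk2⟩ := Finset.mem_Icc.mp hk
    have hc : ((2*m).choose (m+k)) = ((2*m).choose (m-k)) := by
      rw [show m - k = 2*m - (m+k) by omega, Nat.choose_symm (by omega)]
    have c1 : (((m+k:ℕ):ℝ) - m) = (k:ℝ) := by push_cast; ring
    have c2 : (((m-k:ℕ):ℝ) - m) = -(k:ℝ) := by
      rw [Nat.cast_sub hk2]; ring
    rw [hc, c1, c2, pow_add, aux_neg_one_pow_sub hk2, Even.neg_pow ⟨j, by ring⟩ (k:ℝ)]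
    ring
  rw [Finset.sum_congr rfl hterm, hmid, ← Finset.mul_sum, ← Finset.mul_sum] at hm
  set S := ∑ k ∈ Finset.Icc 1 m, (-1:ℝ)^k * ((2*m).choose (m-k)) * (k:ℝ)^(2*j) with hS
  have hne : ((-1:ℝ)^m) ≠ 0 := by
    intro h; have := pow_eq_zero_iff (n := m) (by rintro rfl; simp at h) |>.mp h; norm_num at this
  have hm2 : (-1:ℝ)^m * ((if j = 0 then (((2*m).choose m : ℕ) : ℝ) else 0) + 2 * S) = 0 := by
    split_ifs with hj0
    · rw [if_pos hj0] at hm; linear_combination hm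
    · rw [if_neg hj0] at hm; linear_combination hm
  have h3 : (if j = 0 then (((2*m).choose m : ℕ) : ℝ) else 0) + 2 * S = 0 := by
    rcases mul_eq_zero.mp hm2 with h | h
    · exact absurd h hne
    · exact h
  split_ifs with hj0 <;> split_ifs at h3 <;> linarith

lemma aux_sin_pow (m : ℕ) (t : ℝ) :
    ∑ i ∈ Finset.range (2*m+1), (-1:ℝ)^i * ((2*m).choose i) * Real.cos (2*((i:ℝ)-m)*t)
      = (-4:ℝ)^m * Real.sin t ^ (2*m) := by
  have hneg1 : ∀ i : ℕ, i ≤ 2*m → ((-1:ℂ))^(2*m-i) = (-1)^i := by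
    intro i hile
    have h2' : ((-1:ℂ))^(2*m-i) * (-1)^i = (-1)^(2*m) := by
      rw [← pow_add, Nat.sub_add_cancel hile]
    have h3' : ((-1:ℂ)^i) * ((-1)^i) = 1 := by rw [← pow_add]; exact Even.neg_one_pow ⟨i, rfl⟩
    have h4' : ((-1:ℂ))^(2*m) = 1 := Even.neg_one_pow ⟨m, by ring⟩
    calc (-1:ℂ)^(2*m-i) = (-1:ℂ)^(2*m-i) * ((-1)^i * (-1)^i) := by rw [h3', mul_one]
      _ = (-1)^i := by rw [← mul_assoc, h2', h4', one_mul]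
  have key : ∑ i ∈ Finset.range (2*m+1),
      (((-1:ℝ)^i * ((2*m).choose i) : ℝ) : ℂ) * Complex.exp ((2*((i:ℝ)-m)*t : ℝ) * Complex.I)
      = (((-4:ℝ)^m * Real.sin t ^ (2*m) : ℝ) : ℂ) := by
    have h1 : Complex.exp ((t:ℂ) * Complex.I) - Complex.exp (-((t:ℂ) * Complex.I))
        = 2 * Complex.I * Complex.sin (t:ℂ) := by
      rw [Complex.sin]; ring_nf; rw [Complex.I_sq]; ring
    have h2 := sub_pow (Complex.exp ((t:ℂ) * Complex.I)) (Complex.exp (-((t:ℂ) * Complex.I))) (2*m)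
    rw [h1] at h2
    have h3 : (2 * Complex.I * Complex.sin (t:ℂ)) ^ (2*m)
        = (((-4:ℝ)^m * Real.sin t ^ (2*m) : ℝ) : ℂ) := by
      rw [mul_pow, mul_pow, pow_mul, pow_mul, Complex.I_sq]
      push_cast [Complex.ofReal_sin]
      rw [show ((-4:ℂ))^m = (-1)^m * 4^m from by rw [neg_pow]]
      ring
    rw [h3] at h2
    rw [h2]
    refine Finset.sum_congr rfl fun i hi => ?_
    have hile : i ≤ 2*m := by have := Finset.mem_range.mp hi; omega
    have e1 : Complex.exp ((t:ℂ) * Complex.I) ^ i = Complex.exp ((i:ℂ) * ((t:ℂ) * Complex.I)) :=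
      (Complex.exp_nat_mul _ i).symm
    have e2 : Complex.exp (-((t:ℂ) * Complex.I)) ^ (2*m-i)
        = Complex.exp (-((((2*m-i : ℕ)):ℂ) * ((t:ℂ) * Complex.I))) := by
      rw [← Complex.exp_nat_mul]; ring_nf
    have hcoeff : ((-1:ℂ))^(i+2*m) = (-1)^i := by
      rw [pow_add, (show ((-1:ℂ))^(2*m) = 1 from Even.neg_one_pow ⟨m, by ring⟩), mul_one]
    have hprod : Complex.exp ((i:ℂ) * ((t:ℂ) * Complex.I)) *
        Complex.exp (-((((2*m-i : ℕ)):ℂ) * ((t:ℂ) * Complex.I)))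
        = Complex.exp ((2*((i:ℝ)-m)*t : ℝ) * Complex.I) := by
      rw [← Complex.exp_add]
      congr 1
      push_cast [Nat.cast_sub hile]
      ring
    rw [e1, e2, hcoeff, ← hprod]
    push_cast [Nat.cast_sub hile]
    ring
  have hre := congrArg Complex.re key
  rw [Complex.re_sum, Complex.ofReal_re] at hre
  rw [← hre]
  refine Finset.sum_congr rfl fun i hi => ?_
  rw [Complex.exp_mul_I, ← Complex.ofReal_cos, ← Complex.ofReal_sin]
  simp only [Complex.add_re, Complex.mul_re, Complex.add_im, Complex.mul_im,
    Complex.ofReal_re, Complex.ofReal_im, Complex.I_re, Complex.I_im]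
  ring

lemma aux_cos_sum (m : ℕ) (hm : 1 ≤ m) (t : ℝ) :
    ∑ k ∈ Finset.Icc 1 m, (-1:ℝ)^k * ((2*m).choose (m-k)) * Real.cos (2*(k:ℝ)*t)
      = (2:ℝ)^(2*m-1) * Real.sin t ^ (2*m) - (((2*m).choose m : ℕ) : ℝ)/2 := by
  have hsin := aux_sin_pow m t
  rw [aux_sum_split m
    (fun i => (-1:ℝ)^i * ((2*m).choose i) * Real.cos (2*((i:ℝ)-m)*t))] at hsin
  have hmid : (-1:ℝ)^m * (((2*m).choose m : ℕ) : ℝ) * Real.cos (2*(((m:ℕ):ℝ)-(m:ℝ))*t)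
      = (-1:ℝ)^m * ((2*m).choose m) := by
    rw [sub_self, mul_zero, zero_mul, Real.cos_zero, mul_one]
  have hterm : ∀ k ∈ Finset.Icc 1 m,
      ((-1:ℝ)^(m+k) * ((2*m).choose (m+k)) * Real.cos (2*(((m+k:ℕ):ℝ) - m)*t)
        + (-1:ℝ)^(m-k) * ((2*m).choose (m-k)) * Real.cos (2*(((m-k:ℕ):ℝ) - m)*t))
      = (-1:ℝ)^m * (2 * ((-1:ℝ)^k * ((2*m).choose (m-k)) * Real.cos (2*(k:ℝ)*t))) := by
    intro k hk
    obtain ⟨hk1, hk2⟩ := Finset.mem_Icc.mp hk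
    have hc : ((2*m).choose (m+k)) = ((2*m).choose (m-k)) := by
      rw [show m - k = 2*m - (m+k) by omega, Nat.choose_symm (by omega)]
    have c1 : (((m+k:ℕ):ℝ) - m) = (k:ℝ) := by push_cast; ring
    have c2 : (((m-k:ℕ):ℝ) - m) = -(k:ℝ) := by rw [Nat.cast_sub hk2]; ring
    have c3 : Real.cos (2*(-(k:ℝ))*t) = Real.cos (2*(k:ℝ)*t) := by
      rw [show 2*(-(k:ℝ))*t = -(2*(k:ℝ)*t) by ring, Real.cos_neg]
    rw [hc, c1, c2, c3, pow_add, aux_neg_one_pow_sub hk2]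
    ring
  rw [Finset.sum_congr rfl hterm, hmid, ← Finset.mul_sum, ← Finset.mul_sum] at hsin
  set S := ∑ k ∈ Finset.Icc 1 m, (-1:ℝ)^k * ((2*m).choose (m-k)) * Real.cos (2*(k:ℝ)*t) with hS
  have hsq : ((-1:ℝ)^m) * ((-1:ℝ)^m) = 1 := by
    rw [← pow_add]; exact Even.neg_one_pow ⟨m, rfl⟩
  have h4 : (((2*m).choose m : ℕ) : ℝ) + 2 * S = (2:ℝ)^(2*m) * Real.sin t ^ (2*m) := by
    have hmul := congrArg (fun x => (-1:ℝ)^m * x) hsin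
    have hl : (-1:ℝ)^m * ((-4:ℝ)^m) = (2:ℝ)^(2*m) := by
      rw [← mul_pow, pow_mul]; norm_num
    calc (((2*m).choose m : ℕ) : ℝ) + 2 * S
        = (-1:ℝ)^m * ((-1:ℝ)^m * (((2*m).choose m : ℕ):ℝ) + (-1:ℝ)^m * (2 * S)) := by
          rw [mul_add, ← mul_assoc, ← mul_assoc, hsq]; ring
      _ = (-1:ℝ)^m * ((-4:ℝ)^m * Real.sin t ^ (2*m)) := by rw [hmul]
      _ = (2:ℝ)^(2*m) * Real.sin t ^ (2*m) := by rw [← mul_assoc, hl]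
  have h5 : (2:ℝ)^(2*m) = 2 * (2:ℝ)^(2*m-1) := by
    rw [← pow_succ']
    congr 1
    omega
  rw [h5] at h4
  linarith

lemma aux_f_even (q : ℕ) (x : ℝ) :
    f (2*q) x = (-1:ℝ)^q *
      (Real.cos x - ∑ j ∈ Finset.range q, (-1:ℝ)^j * x^(2*j) / (Nat.factorial (2*j))) := by
  have h1 : (2*q) % 2 = 0 := Nat.mul_mod_right 2 q
  have h2 : (2*q) / 2 = q := Nat.mul_div_cancel_left q (by norm_num)
  rw [f, if_neg (by omega), h2]

theorem stmt_8 (m q : ℕ) (hq : 1 ≤ q) (hqm : q ≤ m) (t : ℝ) :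
    (Real.sin t) ^ (2 * m) =
      (1 / 2 ^ (2 * m - 1)) *
        ∑ k ∈ Finset.Icc 1 m,
          (Nat.choose (2 * m) (m - k) : ℝ) * (-1 : ℝ) ^ (k + q) * f (2 * q) (2 * k * t) := by
  have hm1 : 1 ≤ m := le_trans hq hqm
  have hqsq : ((-1:ℝ)^q) * ((-1:ℝ)^q) = 1 := by
    rw [← pow_add]; exact Even.neg_one_pow ⟨q, rfl⟩
  have hterm : ∀ k ∈ Finset.Icc 1 m,
      (Nat.choose (2 * m) (m - k) : ℝ) * (-1 : ℝ) ^ (k + q) * f (2 * q) (2 * (k:ℝ) * t)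
      = (-1:ℝ)^k * ((2*m).choose (m-k)) * Real.cos (2*(k:ℝ)*t)
        - ∑ j ∈ Finset.range q,
            (-1:ℝ)^j * (2*t)^(2*j) / (Nat.factorial (2*j)) *
              ((-1:ℝ)^k * ((2*m).choose (m-k)) * ((k:ℝ))^(2*j)) := by
    intro k hk
    have hT : ∑ j ∈ Finset.range q,
          (-1:ℝ)^j * (2*t)^(2*j) / (Nat.factorial (2*j)) *
            ((-1:ℝ)^k * ((2*m).choose (m-k)) * ((k:ℝ))^(2*j))
        = (-1:ℝ)^k * (((2*m).choose (m-k) : ℕ) : ℝ) *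
            ∑ j ∈ Finset.range q, (-1:ℝ)^j * (2*(k:ℝ)*t)^(2*j) / (Nat.factorial (2*j)) := by
      rw [Finset.mul_sum]
      refine Finset.sum_congr rfl fun j _ => ?_
      rw [show (2*(k:ℝ)*t) = (k:ℝ)*(2*t) by ring, mul_pow]
      ring
    rw [hT, aux_f_even, pow_add]
    set Cos := Real.cos (2*(k:ℝ)*t) with hCos
    set S := ∑ j ∈ Finset.range q, (-1:ℝ)^j * (2*(k:ℝ)*t)^(2*j) / (Nat.factorial (2*j)) with hSdef
    linear_combination ((((2*m).choose (m-k) : ℕ):ℝ) * (-1:ℝ)^k * (Cos - S)) * hqsq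
  have hsum : ∑ k ∈ Finset.Icc 1 m,
      (Nat.choose (2 * m) (m - k) : ℝ) * (-1 : ℝ) ^ (k + q) * f (2 * q) (2 * (k:ℝ) * t)
      = (2:ℝ)^(2*m-1) * Real.sin t ^ (2*m) := by
    rw [Finset.sum_congr rfl hterm, Finset.sum_sub_distrib, aux_cos_sum m hm1 t]
    have hB : ∑ k ∈ Finset.Icc 1 m, ∑ j ∈ Finset.range q,
          (-1:ℝ)^j * (2*t)^(2*j) / (Nat.factorial (2*j)) *
            ((-1:ℝ)^k * ((2*m).choose (m-k)) * ((k:ℝ))^(2*j))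
        = -((((2*m).choose m : ℕ)):ℝ)/2 := by
      rw [Finset.sum_comm]
      rw [Finset.sum_congr rfl (fun j hj => by
        rw [← Finset.mul_sum,
          aux_halved_moment m j (lt_of_lt_of_le (Finset.mem_range.mp hj) hqm)])]
      simp only [mul_ite, mul_zero]
      rw [Finset.sum_ite_eq' (Finset.range q) 0]
      rw [if_pos (Finset.mem_range.mpr (by omega))]
      norm_num
    rw [hB]
    ring
  rw [hsum]
  have h2ne : ((2:ℝ))^(2*m-1) ≠ 0 := by positivity
  field_simp
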